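/- Suppose κ is a regular uncountable cardinal. If the comparability graph of a tree T with no κ-branch is considered, then K_κ is not a minor of this comparability graph. -/

import Mathlib

universe u

open Cardinal

def Colorable' {V : Type u} (G : SimpleGraph V) (μ : Cardinal.{u}) : Prop :=
  ∃ (β : Type u) (c : V → β), #β ≤ μ ∧ ∀ ⦃x y : V⦄, G.Adj x y → c x ≠ c y

def ChromaticEq {V : Type u} (G : SimpleGraph V) (μ : Cardinal.{u}) : Prop :=
  Colorable' G μ ∧ ∀ ν : Cardinal.{u}, ν < μ → ¬ Colorable' G ν

def HasCompleteMinor {V : Type u} (G : SimpleGraph V) (κ : Cardinal.{u}) : Prop :=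
  ∃ (ι : Type u) (U : ι → Set V), #ι = κ ∧
    (∀ i, (U i).Nonempty) ∧
    (∀ i j, i ≠ j → Disjoint (U i) (U j)) ∧
    (∀ i, (G.induce (U i)).Connected) ∧
    (∀ i j, i ≠ j → ∃ x ∈ U i, ∃ y ∈ U j, G.Adj x y)

def IsSetTree (T : Type u) [PartialOrder T] : Prop :=
  ∀ t : T, IsWellOrder {s : T // s < t} (· < ·)

def compGraph (T : Type u) [PartialOrder T] : SimpleGraph T :=
  SimpleGraph.fromRel (· ≤ ·)

def IsSpecialTree (T : Type u) [PartialOrder T] (κ : Cardinal.{u}) : Prop :=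
  ∃ (β : Type u) (f : T → β), #β ≤ κ ∧ ∀ ⦃s t : T⦄, s < t → f s ≠ f t

def HasChainOfSize (T : Type u) [PartialOrder T] (κ : Cardinal.{u}) : Prop :=
  ∃ C : Set T, IsChain (· ≤ ·) C ∧ #C = κ

def HasAntichainOfSize (T : Type u) [PartialOrder T] (κ : Cardinal.{u}) : Prop :=
  ∃ A : Set T, IsAntichain (· ≤ ·) A ∧ #A = κ

def HasIndepOfSize {V : Type u} (G : SimpleGraph V) (κ : Cardinal.{u}) : Prop :=
  ∃ S : Set V, #S = κ ∧ ∀ x ∈ S, ∀ y ∈ S, ¬ G.Adj x y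

def AllChainsCountable (T : Type u) [PartialOrder T] : Prop :=
  ∀ C : Set T, IsChain (· ≤ ·) C → #C ≤ ℵ₀

noncomputable def nodeHeight {T : Type u} [PartialOrder T] (hT : IsSetTree T) (t : T) : Ordinal.{u} :=
  @Ordinal.type {s : T // s < t} (· < ·) (hT t)

def KappaLambdaConnected {V : Type u} (G : SimpleGraph V) (κ μ : Cardinal.{u}) : Prop :=
  ∀ S : Set V, #S < κ → (Sᶜ : Set V).Nonempty ∧ #((G.induce (Sᶜ : Set V)).ConnectedComponent) < μ

def KappaConnected {V : Type u} (G : SimpleGraph V) (κ : Cardinal.{u}) : Prop :=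
  κ ≤ #V ∧ ∀ S : Set V, #S < κ → (G.induce (Sᶜ : Set V)).Connected

def ContainsSubdivisionOfComplete {V : Type u} (G : SimpleGraph V) (κ : Cardinal.{u}) : Prop :=
  ∃ (ι : Type u) (v : ι → V), #ι = κ ∧ Function.Injective v ∧
    ∃ p : ∀ i j : ι, G.Walk (v i) (v j),
      (∀ i j, i ≠ j → (p i j).IsPath) ∧
      (∀ i j k l, i ≠ j → k ≠ l → (i, j) ≠ (k, l) → (i, j) ≠ (l, k) →
        ∀ x, x ∈ (p i j).support → x ∈ (p k l).support → x ∈ Set.range v) ∧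
      (∀ i j k, i ≠ j → v k ∈ (p i j).support → k = i ∨ k = j)

def IsTGraph {T : Type u} [PartialOrder T] (G : SimpleGraph T) : Prop :=
  (∀ ⦃s t⦄, G.Adj s t → s < t ∨ t < s) ∧
  (∀ t s : T, s < t → ∃ r, s ≤ r ∧ r < t ∧ G.Adj r t)

section Aux

variable {T : Type u} [PartialOrder T]

lemma below_comp (hT : IsSetTree T) {a b t : T} (ha : a ≤ t) (hb : b ≤ t) :
    a ≤ b ∨ b ≤ a := by
  rcases eq_or_lt_of_le ha with rfl | ha'
  · exact Or.inr hb
  rcases eq_or_lt_of_le hb with rfl | hb'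
  · exact Or.inl ha
  have := (hT t).trichotomous ⟨a, ha'⟩ ⟨b, hb'⟩
  have h3 : (⟨a, ha'⟩ : {s : T // s < t}) < ⟨b, hb'⟩ ∨ (⟨a, ha'⟩ : {s : T // s < t}) = ⟨b, hb'⟩ ∨ (⟨b, hb'⟩ : {s : T // s < t}) < ⟨a, ha'⟩ := by tauto
  rcases h3 with h | h | h
  · exact Or.inl (le_of_lt h)
  · exact Or.inl (le_of_eq (congrArg Subtype.val h))
  · exact Or.inr (le_of_lt h)

lemma walk_lb (hT : IsSetTree T) (U : Set T) :
    ∀ {u v : U}, ((compGraph T).induce U).Walk u v →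
      ∃ r ∈ U, r ≤ u.val ∧ r ≤ v.val := by
  intro u v p
  induction p with
  | nil => exact ⟨_, Subtype.coe_prop _, le_refl _, le_refl _⟩
  | @cons u w v h p ih =>
    obtain ⟨r, hrU, hrw, hrv⟩ := ih
    have hadj : (compGraph T).Adj u.val w.val := h
    rw [compGraph, SimpleGraph.fromRel_adj] at hadj
    rcases hadj.2 with huw | hwu
    · rcases below_comp hT hrw huw with hru | hur
      · exact ⟨r, hrU, hru, hrv⟩
      · exact ⟨u.val, u.2, le_refl _, le_trans hur hrv⟩
    · exact ⟨r, hrU, le_trans hrw hwu, hrv⟩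

lemma exists_minimal (hT : IsSetTree T) {S : Set T} (hS : S.Nonempty) :
    ∃ m ∈ S, ∀ s ∈ S, ¬ s < m := by
  obtain ⟨t, ht⟩ := hS
  by_cases h : ∀ s ∈ S, ¬ s < t
  · exact ⟨t, ht, h⟩
  push_neg at h
  obtain ⟨s0, hs0S, hs0t⟩ := h
  have hwf : WellFounded ((· < ·) : {s : T // s < t} → {s : T // s < t} → Prop) :=
    (hT t).wf
  obtain ⟨m, hmmem, hmin⟩ := hwf.has_min {x : {s : T // s < t} | x.val ∈ S} ⟨⟨s0, hs0t⟩, hs0S⟩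
  refine ⟨m.val, hmmem, ?_⟩
  intro s hsS hsm
  exact hmin ⟨s, lt_trans hsm m.2⟩ hsS hsm

/-- A connected set in the comparability graph of a tree has a least element. -/
lemma exists_least (hT : IsSetTree T) {U : Set T}
    (hconn : ((compGraph T).induce U).Connected) :
    ∃ m ∈ U, ∀ s ∈ U, m ≤ s := by
  have hne : U.Nonempty := by
    obtain ⟨⟨x, hx⟩⟩ := hconn.nonempty
    exact ⟨x, hx⟩
  obtain ⟨m, hmU, hmin⟩ := exists_minimal hT hne
  refine ⟨m, hmU, ?_⟩
  intro s hsU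
  obtain ⟨p⟩ := hconn.preconnected ⟨m, hmU⟩ ⟨s, hsU⟩
  obtain ⟨r, hrU, hrm, hrs⟩ := walk_lb hT U p
  rcases eq_or_lt_of_le hrm with rfl | hlt
  · exact hrs
  · exact absurd hlt (hmin r hrU)

end Aux

/-- for κ regular uncountable, the comparability graph of a tree with
no κ-branch has no K_κ minor. -/
theorem stmt3 (κ : Cardinal.{u}) (hreg : κ.IsRegular) (hunc : ℵ₀ < κ)
    (T : Type u) [PartialOrder T] (hT : IsSetTree T)
    (hbranch : ¬ HasChainOfSize T κ) :
    ¬ HasCompleteMinor (compGraph T) κ := by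
  intro ⟨ι, U, hcard, hne, hdisj, hconn, hadj⟩
  choose m hmU hmle using fun i => exists_least hT (hconn i)
  have minj : Function.Injective m := by
    intro i j hij
    by_contra hne'
    exact (hdisj i j hne').ne_of_mem (hmU i) (hmU j) hij
  apply hbranch
  refine ⟨Set.range m, ?_, ?_⟩
  · rintro _ ⟨i, rfl⟩ _ ⟨j, rfl⟩ hne'
    have hij : i ≠ j := fun h => hne' (congrArg m h)
    obtain ⟨a, haU, b, hbU, hab⟩ := hadj i j hij
    rw [compGraph, SimpleGraph.fromRel_adj] at hab
    rcases hab.2 with hle | hle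
    · exact below_comp hT (le_trans (hmle i a haU) hle) (hmle j b hbU)
    · exact below_comp hT (hmle i a haU) (le_trans (hmle j b hbU) hle)
  · rw [Cardinal.mk_range_eq m minj, hcard]
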